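/- Let n = bm with b, m ≥ 2 integers, and let σ_1, …, σ_l ∈ S_n be cycles (permutations with exactly one orbit of size greater than 1) with pairwise disjoint supports, such that b divides the length of each σ_i. Then there exists a partition of {1,…,n} into m blocks, each of size b, such that every σ_i maps each block onto a block; equivalently, the subgroup ⟨σ_1,…,σ_l⟩ is contained in a conjugate of the wreath product S_b ≀ S_m. -/

import Mathlib

open Finset

/-- rank of `x` in finset `A`. -/
private def rkAux {α : Type*} [LinearOrder α] (A : Finset α) (x : α) : ℕ :=
  (A.filter (fun y => y < x)).card

private theorem rkAux_lt {α : Type*} [LinearOrder α] (A : Finset α) {x : α} (hx : x ∈ A) :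
    rkAux A x < A.card := by
  refine Finset.card_lt_card ?_
  refine (Finset.ssubset_iff_of_subset (Finset.filter_subset _ _)).2 ⟨x, hx, ?_⟩
  simp

private theorem rkAux_injOn {α : Type*} [LinearOrder α] (A : Finset α) {x y : α}
    (hx : x ∈ A) (hy : y ∈ A) (h : rkAux A x = rkAux A y) : x = y := by
  rcases lt_trichotomy x y with hxy | hxy | hxy
  · exfalso
    have hss : (A.filter (fun z => z < x)) ⊂ (A.filter (fun z => z < y)) := by
      refine (Finset.ssubset_iff_of_subset ?_).2 ⟨x, ?_, by simp⟩
      · intro z hz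
        simp only [Finset.mem_filter] at hz ⊢
        exact ⟨hz.1, hz.2.trans hxy⟩
      · simp [hx, hxy]
    exact absurd h (Nat.ne_of_lt (Finset.card_lt_card hss))
  · exact hxy
  · exfalso
    have hss : (A.filter (fun z => z < y)) ⊂ (A.filter (fun z => z < x)) := by
      refine (Finset.ssubset_iff_of_subset ?_).2 ⟨y, ?_, by simp⟩
      · intro z hz
        simp only [Finset.mem_filter] at hz ⊢
        exact ⟨hz.1, hz.2.trans hxy⟩
      · simp [hy, hxy]
    exact absurd h.symm (Nat.ne_of_lt (Finset.card_lt_card hss))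

/-- From a fiber function with all fibers of size `b`, build a permutation realizing it as
floor-division by `b`. -/
private theorem exists_perm_of_fiber (n b m : ℕ) (hn : n = b * m) (f : Fin n → Fin m)
    (hf : ∀ v, (Finset.univ.filter (fun x => f x = v)).card = b) :
    ∃ k : Equiv.Perm (Fin n), ∀ x, ((k x : ℕ)) / b = (f x : ℕ) := by
  rcases Nat.eq_zero_or_pos n with hn0 | hn0
  · subst hn0
    exact ⟨1, fun x => absurd x.2 (by omega)⟩
  have hb : 0 < b := by
    rcases Nat.eq_zero_or_pos b with h | h
    · exfalso; subst h; simp at hn; omega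
    · exact h
  have hrk : ∀ x : Fin n, rkAux (Finset.univ.filter (fun y => f y = f x)) x < b := by
    intro x
    have hx : x ∈ Finset.univ.filter (fun y => f y = f x) := by simp
    have := rkAux_lt _ hx
    rwa [hf (f x)] at this
  have hbound : ∀ x : Fin n, b * (f x : ℕ) + rkAux (Finset.univ.filter (fun y => f y = f x)) x < n := by
    intro x
    have h1 : (f x : ℕ) < m := (f x).2
    calc b * (f x : ℕ) + rkAux (Finset.univ.filter (fun y => f y = f x)) x
        < b * (f x : ℕ) + b := by have := hrk x; omega
      _ = b * ((f x : ℕ) + 1) := by ring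
      _ ≤ b * m := Nat.mul_le_mul_left _ (by omega)
      _ = n := hn.symm
  set φ : Fin n → Fin n := fun x => ⟨b * (f x : ℕ) + rkAux (Finset.univ.filter (fun y => f y = f x)) x, hbound x⟩ with hφ
  have hinj : Function.Injective φ := by
    intro x y hxy
    have hval : b * (f x : ℕ) + rkAux (Finset.univ.filter (fun z => f z = f x)) x
        = b * (f y : ℕ) + rkAux (Finset.univ.filter (fun z => f z = f y)) y :=
      congrArg Fin.val hxy
    have hfx : (f x : ℕ) = (f y : ℕ) := by
      have h1 := hrk x; have h2 := hrk y
      have e1 : (b * (f x : ℕ) + rkAux (Finset.univ.filter (fun z => f z = f x)) x) / b = (f x : ℕ) := by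
        rw [Nat.mul_add_div hb, Nat.div_eq_of_lt h1]; omega
      have e2 : (b * (f y : ℕ) + rkAux (Finset.univ.filter (fun z => f z = f y)) y) / b = (f y : ℕ) := by
        rw [Nat.mul_add_div hb, Nat.div_eq_of_lt h2]; omega
      rw [← e1, ← e2, hval]
    have hffxy : f x = f y := Fin.ext hfx
    rw [hffxy] at hval
    have hrkeq : rkAux (Finset.univ.filter (fun z => f z = f y)) x
        = rkAux (Finset.univ.filter (fun z => f z = f y)) y := by omega
    exact rkAux_injOn _ (by simp [hffxy]) (by simp) hrkeq
  have hbij : Function.Bijective φ := Finite.injective_iff_bijective.mp hinj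
  refine ⟨Equiv.ofBijective φ hbij, fun x => ?_⟩
  show ((φ x : ℕ)) / b = (f x : ℕ)
  simp only [hφ]
  rw [Nat.mul_add_div hb, Nat.div_eq_of_lt (hrk x)]
  omega
private theorem exists_fiber_fun (n b m : ℕ) (hb : 2 ≤ b) (hm : 2 ≤ m)
    (hn : n = b * m) (l : ℕ) (σ : Fin l → Equiv.Perm (Fin n))
    (hcyc : ∀ i, (σ i).IsCycle)
    (hdisj : ∀ i j, i ≠ j → (σ i).Disjoint (σ j))
    (hdvd : ∀ i, b ∣ (σ i).support.card) :
    ∃ (f : Fin n → Fin m) (g : Fin l → ℕ → ℕ),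
      (∀ i, Function.Injective (g i)) ∧
      (∀ i x, ((f (σ i x)) : ℕ) = g i ((f x : ℕ))) ∧
      (∀ v, (Finset.univ.filter (fun x => f x = v)).card = b) := by
  classical
  obtain ⟨t, htdef⟩ : ∃ t : Fin l → ℕ, ∀ i, t i = (σ i).support.card / b :=
    ⟨_, fun _ => rfl⟩
  obtain ⟨s, hsdef⟩ : ∃ s : Fin l → ℕ,
      ∀ i, s i = ∑ i' ∈ Finset.univ.filter (fun i' => i' < i), t i' := ⟨_, fun _ => rfl⟩
  obtain ⟨T, hTdef⟩ : ∃ T : ℕ, T = ∑ i, t i := ⟨_, rfl⟩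
  obtain ⟨N, hNdef⟩ : ∃ N : Finset (Fin n),
      N = (Finset.univ.biUnion fun i => (σ i).support)ᶜ := ⟨_, rfl⟩
  have hb0 : 0 < b := by omega
  have hLbt : ∀ i, (σ i).support.card = b * t i := by
    intro i; rw [htdef]; exact (Nat.mul_div_cancel' (hdvd i)).symm
  have hL2 : ∀ i, 2 ≤ (σ i).support.card := fun i => (hcyc i).two_le_card_support
  have hLpos : ∀ i, 0 < (σ i).support.card := fun i => by have := hL2 i; omega
  have htpos : ∀ i, 0 < t i := by
    intro i; rw [htdef]
    exact Nat.div_pos (Nat.le_of_dvd (hLpos i) (hdvd i)) hb0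
  have hSdisj : ∀ i j, i ≠ j → Disjoint (σ i).support (σ j).support :=
    fun i j hij => (hdisj i j hij).disjoint_support
  have ha' : ∀ i, ∃ x, x ∈ (σ i).support := fun i => Finset.card_pos.mp (hLpos i)
  choose a ha using ha'
  have haa : ∀ i, σ i (a i) ≠ a i := fun i => Equiv.Perm.mem_support.mp (ha i)
  have horder : ∀ i, orderOf (σ i) = (σ i).support.card := fun i => (hcyc i).orderOf
  have hordex : ∀ i x, x ∈ (σ i).support →
      ∃ j, j < (σ i).support.card ∧ (σ i ^ j) (a i) = x := by
    intro i x hx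
    obtain ⟨j0, hj0⟩ := (hcyc i).exists_pow_eq (haa i) (Equiv.Perm.mem_support.mp hx)
    refine ⟨j0 % (σ i).support.card, Nat.mod_lt _ (hLpos i), ?_⟩
    rw [← horder i, pow_mod_orderOf]
    exact hj0
  have hordex' : ∀ i x, ∃ j, x ∈ (σ i).support →
      (j < (σ i).support.card ∧ (σ i ^ j) (a i) = x) := by
    intro i x
    by_cases hx : x ∈ (σ i).support
    · obtain ⟨j, h1, h2⟩ := hordex i x hx
      exact ⟨j, fun _ => ⟨h1, h2⟩⟩
    · exact ⟨0, fun h => absurd h hx⟩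
  choose ord hord using hordex'
  have hordlt : ∀ i x, x ∈ (σ i).support → ord i x < (σ i).support.card :=
    fun i x hx => (hord i x hx).1
  have hordspec : ∀ i x, x ∈ (σ i).support → (σ i ^ ord i x) (a i) = x :=
    fun i x hx => (hord i x hx).2
  have hpowinj : ∀ i, ∀ j k, j < (σ i).support.card → k < (σ i).support.card →
      (σ i ^ j) (a i) = (σ i ^ k) (a i) → j = k := by
    intro i
    set e : Fin ((σ i).support.card) → {x // x ∈ (σ i).support} :=
      fun j => ⟨(σ i ^ (j : ℕ)) (a i), Equiv.Perm.pow_apply_mem_support.mpr (ha i)⟩ with he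
    have hesurj : Function.Surjective e := by
      rintro ⟨x, hx⟩
      exact ⟨⟨ord i x, hordlt i x hx⟩, Subtype.ext (hordspec i x hx)⟩
    have hecard : Fintype.card (Fin ((σ i).support.card))
        = Fintype.card {x // x ∈ (σ i).support} := by
      rw [Fintype.card_fin, Fintype.card_coe]
    have heinj : Function.Injective e :=
      ((Fintype.bijective_iff_surjective_and_card e).mpr ⟨hesurj, hecard⟩).1
    intro j k hj hk hjk
    have h2 : e ⟨j, hj⟩ = e ⟨k, hk⟩ := Subtype.ext hjk
    simpa using congrArg Fin.val (heinj h2)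
  have horduniq : ∀ i x, x ∈ (σ i).support → ∀ j, j < (σ i).support.card →
      (σ i ^ j) (a i) = x → j = ord i x := by
    intro i x hx j hj hjx
    exact hpowinj i j _ hj (hordlt i x hx) (by rw [hjx, hordspec i x hx])
  -- interval offsets
  have hsle : ∀ i, s i + t i ≤ T := by
    intro i
    have hnotmem : i ∉ Finset.univ.filter (fun i' => i' < i) := by simp
    have h1 : s i + t i = ∑ i' ∈ insert i (Finset.univ.filter (fun i' => i' < i)), t i' := by
      rw [hsdef, Finset.sum_insert hnotmem]; omega
    rw [h1, hTdef]
    exact Finset.sum_le_sum_of_subset (Finset.subset_univ _)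
  have hslt : ∀ i j, i < j → s i + t i ≤ s j := by
    intro i j hij
    have hnotmem : i ∉ Finset.univ.filter (fun i' => i' < i) := by simp
    have h1 : s i + t i = ∑ i' ∈ insert i (Finset.univ.filter (fun i' => i' < i)), t i' := by
      rw [hsdef, Finset.sum_insert hnotmem]; omega
    rw [h1, hsdef]
    refine Finset.sum_le_sum_of_subset ?_
    intro z hz
    simp only [Finset.mem_insert, Finset.mem_filter, Finset.mem_univ, true_and] at hz ⊢
    rcases hz with rfl | h
    · exact hij
    · exact h.trans hij
  have hUcard : (Finset.univ.biUnion fun i => (σ i).support).card = b * T := by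
    rw [Finset.card_biUnion (fun i _ j _ hij => hSdisj i j hij), hTdef, Finset.mul_sum]
    exact Finset.sum_congr rfl fun i _ => hLbt i
  have hTm : T ≤ m := by
    have h1 : (Finset.univ.biUnion fun i => (σ i).support).card ≤ n := by
      have := Finset.card_le_univ (Finset.univ.biUnion fun i => (σ i).support)
      simpa using this
    rw [hUcard, hn] at h1
    exact Nat.le_of_mul_le_mul_left h1 hb0
  have hNcard : N.card = b * (m - T) := by
    obtain ⟨d, hd⟩ : ∃ d, m = T + d := ⟨m - T, by omega⟩
    rw [hNdef, Finset.card_compl, hUcard, Fintype.card_fin, hn]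
    subst hd
    have h3 : b * (T + d) = b * T + b * d := by ring
    have h4 : T + d - T = d := by omega
    rw [h4]
    omega
  have hNmem : ∀ x, x ∈ N ↔ ∀ i, x ∉ (σ i).support := by
    intro x; rw [hNdef]; simp
  -- the block function
  obtain ⟨fnat, hfS, hfN⟩ : ∃ fnat : Fin n → ℕ,
      (∀ i x, x ∈ (σ i).support → fnat x = s i + (ord i x) % t i) ∧
      (∀ x, x ∈ N → fnat x = T + rkAux N x / b) := by
    refine ⟨fun x => if h : ∃ i, x ∈ (σ i).support then
        s h.choose + (ord h.choose x) % t h.choose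
      else T + rkAux N x / b, ?_, ?_⟩
    · intro i x hx
      have h : ∃ i', x ∈ (σ i').support := ⟨i, hx⟩
      have hci : h.choose = i := by
        by_contra hne
        exact (Finset.disjoint_left.mp (hSdisj _ _ hne) h.choose_spec) hx
      simp only [dif_pos h, hci]
    · intro x hx
      have h : ¬∃ i, x ∈ (σ i).support := by
        rw [hNmem] at hx
        exact fun ⟨i, hi⟩ => hx i hi
      simp only [dif_neg h]
  have hflt : ∀ x, fnat x < m := by
    intro x
    by_cases hx : ∃ i, x ∈ (σ i).support
    · obtain ⟨i, hi⟩ := hx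
      rw [hfS i x hi]
      have h1 : ord i x % t i < t i := Nat.mod_lt _ (htpos i)
      have h2 := hsle i
      omega
    · have hxN : x ∈ N := (hNmem x).mpr (not_exists.mp hx)
      rw [hfN x hxN]
      have h1 : rkAux N x < N.card := rkAux_lt N hxN
      rw [hNcard] at h1
      have h2 : rkAux N x / b < m - T := Nat.div_lt_of_lt_mul h1
      omega
  obtain ⟨g, hgdef⟩ : ∃ g : Fin l → ℕ → ℕ, ∀ i v,
      g i v = if s i ≤ v ∧ v < s i + t i then s i + ((v - s i + 1) % t i) else v :=
    ⟨_, fun _ _ => rfl⟩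
  have hginj : ∀ i, Function.Injective (g i) := by
    intro i u v huv
    rw [hgdef, hgdef] at huv
    by_cases hu : s i ≤ u ∧ u < s i + t i <;> by_cases hv : s i ≤ v ∧ v < s i + t i
    · rw [if_pos hu, if_pos hv] at huv
      have h1 : (u - s i + 1) % t i = (v - s i + 1) % t i := by omega
      have h2 : (u - s i) % t i = (v - s i) % t i := Nat.ModEq.add_right_cancel' 1 h1
      rw [Nat.mod_eq_of_lt (by omega), Nat.mod_eq_of_lt (by omega)] at h2
      omega
    · rw [if_pos hu, if_neg hv] at huv
      have h1 : (u - s i + 1) % t i < t i := Nat.mod_lt _ (htpos i)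
      omega
    · rw [if_neg hu, if_pos hv] at huv
      have h1 : (v - s i + 1) % t i < t i := Nat.mod_lt _ (htpos i)
      omega
    · rwa [if_neg hu, if_neg hv] at huv
  have hcompat : ∀ i x, fnat (σ i x) = g i (fnat x) := by
    intro i x
    by_cases hx : x ∈ (σ i).support
    · have hx' : σ i x ∈ (σ i).support := Equiv.Perm.apply_mem_support.mpr hx
      rw [hfS i x hx, hfS i (σ i x) hx']
      have hsucc : ord i (σ i x) = (ord i x + 1) % (σ i).support.card := by
        refine (horduniq i (σ i x) hx' _ (Nat.mod_lt _ (hLpos i)) ?_).symm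
        rw [← horder i, pow_mod_orderOf, pow_succ', Equiv.Perm.mul_apply,
          hordspec i x hx]
      rw [hsucc, hgdef]
      have hmod : ord i x % t i < t i := Nat.mod_lt _ (htpos i)
      rw [if_pos ⟨Nat.le_add_right _ _, by omega⟩]
      congr 1
      have hdvdt : t i ∣ (σ i).support.card := ⟨b, by rw [hLbt i, mul_comm]⟩
      rw [Nat.mod_mod_of_dvd _ hdvdt]
      have h3 : s i + ord i x % t i - s i = ord i x % t i := by omega
      rw [h3]
      exact ((Nat.mod_modEq (ord i x) (t i)).add_right 1).symm
    · have hfix : σ i x = x := Equiv.Perm.notMem_support.mp hx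
      rw [hfix, hgdef]
      refine (if_neg ?_).symm
      rintro ⟨h1, h2⟩
      by_cases hx2 : ∃ j, x ∈ (σ j).support
      · obtain ⟨j, hj⟩ := hx2
        have hji : j ≠ i := fun e => hx (e ▸ hj)
        rw [hfS j x hj] at h1 h2
        have hmod : ord j x % t j < t j := Nat.mod_lt _ (htpos j)
        rcases lt_or_gt_of_ne hji with h | h
        · have := hslt j i h; omega
        · have := hslt i j h; omega
      · have hxN : x ∈ N := (hNmem x).mpr (not_exists.mp hx2)
        rw [hfN x hxN] at h2
        have h4 := hsle i
        generalize hgen : rkAux N x / b = r at h2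
        omega
  -- fibers have size at most b
  have hfib1 : ∀ v : ℕ, (Finset.univ.filter (fun x => fnat x = v)).card ≤ b := by
    intro v
    rcases Finset.eq_empty_or_nonempty (Finset.univ.filter (fun x => fnat x = v)) with he | hne
    · rw [he]; simp
    · obtain ⟨x0, hx0⟩ := hne
      have hx0' := (Finset.mem_filter.mp hx0).2
      by_cases hc : ∃ i, x0 ∈ (σ i).support
      · obtain ⟨i, hi⟩ := hc
        have hv1 : s i ≤ v ∧ v < s i + t i := by
          rw [← hx0', hfS i x0 hi]
          have := Nat.mod_lt (ord i x0) (htpos i)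
          omega
        have hsub : ∀ y ∈ Finset.univ.filter (fun x => fnat x = v), y ∈ (σ i).support := by
          intro y hy
          have hy' := (Finset.mem_filter.mp hy).2
          by_cases hcy : ∃ j, y ∈ (σ j).support
          · obtain ⟨j, hj⟩ := hcy
            rcases eq_or_ne j i with rfl | hne2
            · exact hj
            · exfalso
              rw [hfS j y hj] at hy'
              have hmod := Nat.mod_lt (ord j y) (htpos j)
              rcases lt_or_gt_of_ne hne2 with h | h
              · have := hslt j i h; omega
              · have := hslt i j h; omega
          · exfalso
            have hyN : y ∈ N := (hNmem y).mpr (not_exists.mp hcy)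
            rw [hfN y hyN] at hy'
            have h4 := hsle i
            generalize hgen : rkAux N y / b = r at hy'
            omega
        calc (Finset.univ.filter (fun x => fnat x = v)).card
            ≤ (Finset.range b).card := by
              refine Finset.card_le_card_of_injOn (fun y => ord i y / t i) ?_ ?_
              · intro y hy
                have hyS := hsub y hy
                simp only [Finset.mem_range]
                have h1 : ord i y < (σ i).support.card := hordlt i y hyS
                rw [hLbt i, mul_comm] at h1
                exact Finset.mem_coe.mpr (Finset.mem_range.mpr (Nat.div_lt_of_lt_mul h1))
              · intro y hy z hz hyz
                have hy2 := Finset.mem_coe.mp hy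
                have hz2 := Finset.mem_coe.mp hz
                have hyz' : ord i y / t i = ord i z / t i := hyz
                have hyS := hsub y hy2
                have hzS := hsub z hz2
                have hy' := (Finset.mem_filter.mp hy2).2
                have hz' := (Finset.mem_filter.mp hz2).2
                rw [hfS i y hyS] at hy'
                rw [hfS i z hzS] at hz'
                have hmodeq : ord i y % t i = ord i z % t i := by omega
                have hordeq : ord i y = ord i z := by
                  have e1 := Nat.div_add_mod (ord i y) (t i)
                  have e2 := Nat.div_add_mod (ord i z) (t i)
                  rw [hyz', hmodeq, e2] at e1
                  exact e1.symm
                rw [← hordspec i y hyS, ← hordspec i z hzS, hordeq]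
          _ = b := Finset.card_range b
      · have hx0N : x0 ∈ N := (hNmem x0).mpr (not_exists.mp hc)
        have hvT : T ≤ v := by
          rw [← hx0', hfN x0 hx0N]; exact Nat.le_add_right _ _
        have hsub : ∀ y ∈ Finset.univ.filter (fun x => fnat x = v), y ∈ N := by
          intro y hy
          have hy' := (Finset.mem_filter.mp hy).2
          by_cases hcy : ∃ j, y ∈ (σ j).support
          · obtain ⟨j, hj⟩ := hcy
            exfalso
            rw [hfS j y hj] at hy'
            have := hsle j
            have hmod := Nat.mod_lt (ord j y) (htpos j)
            omega
          · exact (hNmem y).mpr (not_exists.mp hcy)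
        calc (Finset.univ.filter (fun x => fnat x = v)).card
            ≤ (Finset.range b).card := by
              refine Finset.card_le_card_of_injOn (fun y => rkAux N y % b) ?_ ?_
              · intro y hy
                simp only [Finset.mem_range]
                exact Finset.mem_coe.mpr (Finset.mem_range.mpr (Nat.mod_lt _ hb0))
              · intro y hy z hz hyz
                have hy2 := Finset.mem_coe.mp hy
                have hz2 := Finset.mem_coe.mp hz
                have hyz' : rkAux N y % b = rkAux N z % b := hyz
                have hyN := hsub y hy2
                have hzN := hsub z hz2
                have hy' := (Finset.mem_filter.mp hy2).2
                have hz' := (Finset.mem_filter.mp hz2).2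
                rw [hfN y hyN] at hy'
                rw [hfN z hzN] at hz'
                have hdiv : rkAux N y / b = rkAux N z / b :=
                  Nat.add_left_cancel (hy'.trans hz'.symm)
                have hrkeq : rkAux N y = rkAux N z := by
                  have e1 := Nat.div_add_mod (rkAux N y) b
                  have e2 := Nat.div_add_mod (rkAux N z) b
                  rw [hdiv, hyz', e2] at e1
                  exact e1.symm
                exact rkAux_injOn N hyN hzN hrkeq
          _ = b := Finset.card_range b
  -- package into Fin m
  obtain ⟨f, hfval⟩ : ∃ f : Fin n → Fin m, ∀ x, (f x : ℕ) = fnat x :=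
    ⟨fun x => ⟨fnat x, hflt x⟩, fun _ => rfl⟩
  have hequiv : ∀ v : Fin m, (Finset.univ.filter (fun x => f x = v))
      = (Finset.univ.filter (fun x => fnat x = (v : ℕ))) := by
    intro v
    refine Finset.filter_congr ?_
    intro x _
    rw [Fin.ext_iff, hfval x]
  have hsum : ∑ v : Fin m, (Finset.univ.filter (fun x => f x = v)).card = n := by
    have h1 := Finset.card_eq_sum_card_fiberwise
      (s := Finset.univ) (t := Finset.univ) (f := f) (fun x _ => Finset.mem_univ (f x))
    rw [← h1, Finset.card_univ, Fintype.card_fin]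
  have hfib : ∀ v : Fin m, (Finset.univ.filter (fun x => f x = v)).card = b := by
    by_contra hcon
    push_neg at hcon
    obtain ⟨v0, hv0⟩ := hcon
    have hle : ∀ v : Fin m, (Finset.univ.filter (fun x => f x = v)).card ≤ b := by
      intro v; rw [hequiv]; exact hfib1 (v : ℕ)
    have hlt : ∑ v : Fin m, (Finset.univ.filter (fun x => f x = v)).card
        < ∑ _v : Fin m, b :=
      Finset.sum_lt_sum (fun v _ => hle v) ⟨v0, Finset.mem_univ v0,
        lt_of_le_of_ne (hle v0) hv0⟩
    rw [hsum] at hlt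
    have h2 : ∑ _v : Fin m, b = m * b := by
      rw [Finset.sum_const, Finset.card_univ, Fintype.card_fin, smul_eq_mul]
    rw [h2] at hlt
    have h3 : m * b = b * m := mul_comm m b
    omega
  refine ⟨f, g, hginj, ?_, hfib⟩
  intro i x
  rw [hfval, hfval]
  exact hcompat i x
/-- The stabilizer `S_b ≀ S_{n/b}` in `Sₙ` of the partition of `{0,…,n-1}` into consecutive
blocks of size `b`. -/
def blockStab (n b : ℕ) : Subgroup (Equiv.Perm (Fin n)) where
  carrier := {ψ | ∀ a c : Fin n, (ψ a : ℕ) / b = (ψ c : ℕ) / b ↔ (a : ℕ) / b = (c : ℕ) / b}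
  one_mem' := by intro a c; simp
  mul_mem' := by
    intro ψ φ hψ hφ a c
    simp only [Equiv.Perm.mul_apply]
    exact (hψ _ _).trans (hφ _ _)
  inv_mem' := by
    intro ψ hψ a c
    simpa using (hψ (ψ⁻¹ a) (ψ⁻¹ c)).symm

/-- Disjoint cycles whose lengths are all divisible by `b` generate a subgroup of `Sₙ`
(`n = b * m`) contained in a conjugate of `S_b ≀ S_m`. -/
theorem closure_disjoint_cycles_le_conj_blockStab (n b m : ℕ) (hb : 2 ≤ b) (hm : 2 ≤ m)
    (hn : n = b * m) (l : ℕ) (σ : Fin l → Equiv.Perm (Fin n))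
    (hcyc : ∀ i, (σ i).IsCycle)
    (hdisj : ∀ i j, i ≠ j → (σ i).Disjoint (σ j))
    (hdvd : ∀ i, b ∣ (σ i).support.card) :
    ∃ k : Equiv.Perm (Fin n),
      ∀ q ∈ Subgroup.closure (Set.range σ), k * q * k⁻¹ ∈ blockStab n b := by
  obtain ⟨f, g, hginj, hcompat, hfib⟩ := exists_fiber_fun n b m hb hm hn l σ hcyc hdisj hdvd
  obtain ⟨k, hk⟩ := exists_perm_of_fiber n b m hn f hfib
  refine ⟨k, ?_⟩
  have h2 : ∀ z : Fin n, (z : ℕ) / b = ((f (k⁻¹ z)) : ℕ) := by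
    intro z
    rw [← hk (k⁻¹ z), show k (k⁻¹ z) = z from Equiv.apply_symm_apply k z]
  have hgen : ∀ i, k * σ i * k⁻¹ ∈ blockStab n b := by
    intro i
    show ∀ a c : Fin n, (((k * σ i * k⁻¹) a : ℕ) / b = ((k * σ i * k⁻¹) c : ℕ) / b)
      ↔ ((a : ℕ) / b = (c : ℕ) / b)
    intro a c
    have h1 : ∀ z : Fin n, ((k * σ i * k⁻¹) z : ℕ) / b = g i ((f (k⁻¹ z) : ℕ)) := by
      intro z
      simp only [Equiv.Perm.mul_apply]
      rw [hk, hcompat]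
    rw [h1 a, h1 c, h2 a, h2 c]
    exact ⟨fun h => hginj i h, fun h => congrArg (g i) h⟩
  intro q hq
  have hle : Subgroup.closure (Set.range σ) ≤
      (blockStab n b).comap (MulAut.conj k).toMonoidHom := by
    rw [Subgroup.closure_le]
    rintro x ⟨i, rfl⟩
    rw [SetLike.mem_coe, Subgroup.mem_comap]
    simpa using hgen i
  have h5 := hle hq
  rw [Subgroup.mem_comap] at h5
  simpa using h5
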